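/- Let h : [0, ∞) → [0, ∞) be bijective, strictly increasing, concave, with h(0) = 0, differentiable on (0, ∞) with h′ > 0 on (0, ∞). Let κ ≥ 1 and let f : E → ℝ be convex with nonempty minimizer set X* and minimum value f*, satisfying both f(x) − f* ≤ h(d(x, X*)²) and f(x) − f* ≥ h(d(x, X*)²/κ) for all x ∈ E. Let (x_k) be iterates of the heavy-ball method for h-RG+ functions: for k ≥ 1, pick g_{k−1} ∈ ∂f(x_{k−1}) (with g_{k−1} = 0 whenever f(x_{k−1}) = f*), set γ_{k−1} = 1/(2(k+1)·h′(h⁻¹(f(x_{k−1}) − f*))) if f(x_{k−1}) > f* and γ_{k−1} = 0 otherwise, and set x_k = x_{k−1} − γ_{k−1}·g_{k−1} + ((k−1)/(k+1))·(x_{k−1} − x_{k−2}) (the momentum term being absent for k = 1). Then for every n ∈ ℕ: d(x_n, X*)² ≤ (κ/(n+1))·d(x_0, X*)². -/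

import Mathlib

open scoped RealInnerProductSpace

theorem heavy_ball_rg_plus_distance_contraction
    {E : Type*} [NormedAddCommGroup E] [InnerProductSpace ℝ E] [FiniteDimensional ℝ E]
    (h hinv h' : ℝ → ℝ)
    (hbij : Set.BijOn h (Set.Ici 0) (Set.Ici 0))
    (hmono : StrictMonoOn h (Set.Ici 0))
    (hconc : ConcaveOn ℝ (Set.Ici 0) h)
    (h0 : h 0 = 0)
    (hderiv : ∀ t > (0 : ℝ), HasDerivAt h (h' t) t)
    (hpos : ∀ t > (0 : ℝ), 0 < h' t)
    (hinvOn : Set.InvOn hinv h (Set.Ici 0) (Set.Ici 0))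
    (κ : ℝ) (hκ : 1 ≤ κ)
    (f : E → ℝ) (hconv : ConvexOn ℝ Set.univ f)
    (Xstar : Set E) (hXstar : Xstar = {z | ∀ y, f z ≤ f y}) (hne : Xstar.Nonempty)
    (fstar : ℝ) (hfstar : ∀ z ∈ Xstar, f z = fstar)
    (hRG : ∀ z, f z - fstar ≤ h (Metric.infDist z Xstar ^ 2))
    (hLG : ∀ z, f z - fstar ≥ h (Metric.infDist z Xstar ^ 2 / κ))
    (x g : ℕ → E) (γ : ℕ → ℝ)
    (hsub : ∀ k, ∀ y, f y ≥ f (x k) + ⟪g k, y - x k⟫)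
    (hzero : ∀ k, f (x k) = fstar → g k = 0)
    (hγ : ∀ k, γ k = if fstar < f (x k)
        then 1 / (2 * ((k : ℝ) + 2) * h' (hinv (f (x k) - fstar))) else 0)
    (hupd : ∀ k, 1 ≤ k →
      x k = x (k - 1) - γ (k - 1) • g (k - 1)
        + ((((k : ℝ) - 1) / ((k : ℝ) + 1)) • (x (k - 1) - x (k - 2)))) :
    ∀ n : ℕ,
      Metric.infDist (x n) Xstar ^ 2
        ≤ κ / ((n : ℝ) + 1) * Metric.infDist (x 0) Xstar ^ 2 := by
  classical
  obtain ⟨z0, hz0mem⟩ := hne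
  have hz0min : ∀ y, f z0 ≤ f y := by
    have hz := hz0mem; rw [hXstar] at hz; exact hz
  have hfz0 : f z0 = fstar := hfstar z0 hz0mem
  have hfge : ∀ y, fstar ≤ f y := fun y => hfz0 ▸ hz0min y
  have hκ0 : (0:ℝ) < κ := lt_of_lt_of_le one_pos hκ
  -- basic facts about hinv
  have hinv_h : ∀ t : ℝ, 0 ≤ t → hinv (h t) = t := fun t ht => hinvOn.1 ht
  have h_nonneg : ∀ t : ℝ, 0 ≤ t → 0 ≤ h t := fun t ht => hbij.mapsTo ht
  have hinv_nonneg : ∀ c : ℝ, 0 ≤ c → 0 ≤ hinv c := by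
    intro c hc
    obtain ⟨t, ht, rfl⟩ := hbij.surjOn hc
    rw [hinv_h t ht]; exact ht
  have h_hinv : ∀ c : ℝ, 0 ≤ c → h (hinv c) = c := fun c hc => hinvOn.2 hc
  have hinv_mono : ∀ a c : ℝ, 0 ≤ a → 0 ≤ c → a ≤ c → hinv a ≤ hinv c := by
    intro a c ha hc hac
    obtain ⟨t1, ht1, rfl⟩ := hbij.surjOn ha
    obtain ⟨t2, ht2, rfl⟩ := hbij.surjOn hc
    rw [hinv_h t1 ht1, hinv_h t2 ht2]
    by_contra hlt
    push_neg at hlt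
    exact absurd (hmono ht2 ht1 hlt) (not_lt.2 hac)
  -- tangent line inequality for the concave function h
  have tangent : ∀ u : ℝ, 0 < u → ∀ c : ℝ, 0 ≤ c → h c ≤ h u + h' u * (c - u) := by
    intro u hu c hc
    rcases lt_trichotomy c u with hlt | rfl | hgt
    · have hs := hconc.le_slope_of_hasDerivAt (Set.mem_Ici.2 hc) (Set.mem_Ici.2 hu.le)
        hlt (hderiv u hu)
      rw [slope_def_field] at hs
      have hcu : 0 < u - c := by linarith
      rw [le_div_iff₀ hcu] at hs
      nlinarith
    · simp
    · have hs := hconc.slope_le_of_hasDerivAt (Set.mem_Ici.2 hu.le) (Set.mem_Ici.2 hc)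
        hgt (hderiv u hu)
      rw [slope_def_field] at hs
      have hcu : 0 < c - u := by linarith
      rw [div_le_iff₀ hcu] at hs
      nlinarith
  -- the key sequences
  set B : ℕ → ℝ := fun j => hinv (f (x j) - fstar) with hBdef
  set G : ℕ → E := fun j => (2 * ((j:ℝ) + 2) * γ j) • g j with hGdef
  set s : ℕ → E := fun k => ((k:ℝ) + 1) • x k - (k:ℝ) • x (k - 1) with hsdef
  have hBnonneg : ∀ j, 0 ≤ B j := fun j => hinv_nonneg _ (sub_nonneg.2 (hfge _))
  -- G j is a subgradient at x j of the convex function hinv ∘ (f - fstar)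
  have key : ∀ j : ℕ, ∀ y : E, B j + ⟪G j, y - x j⟫ ≤ hinv (f y - fstar) := by
    intro j y
    rcases eq_or_lt_of_le (hfge (x j)) with heq | hlt
    · have hg0 : g j = 0 := hzero j heq.symm
      have hG0 : G j = 0 := by simp [hGdef, hg0]
      have hB0 : B j = 0 := by
        have : f (x j) - fstar = 0 := by rw [← heq]; ring
        simp only [hBdef, this]
        calc hinv 0 = hinv (h 0) := by rw [h0]
          _ = 0 := hinv_h 0 le_rfl
      rw [hG0, hB0]
      simpa using hinv_nonneg _ (sub_nonneg.2 (hfge y))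
    · have hδ : 0 < f (x j) - fstar := sub_pos.2 hlt
      have hBj : 0 < B j := by
        rcases (hinv_nonneg _ hδ.le).lt_or_eq with h1 | h1
        · exact h1
        · exfalso
          have h2 := h_hinv _ hδ.le
          rw [show hinv (f (x j) - fstar) = (0:ℝ) from h1.symm, h0] at h2
          linarith
      have hhB : h (B j) = f (x j) - fstar := h_hinv _ hδ.le
      have hp' : 0 < h' (B j) := hpos _ hBj
      have hGj : G j = (h' (B j))⁻¹ • g j := by
        simp only [hGdef, hγ j, if_pos hlt]
        congr 1
        have hj2 : ((j:ℝ) + 2) ≠ 0 := by positivity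
        field_simp
        exact div_self hp'.ne'
      have hc0 : 0 ≤ hinv (f y - fstar) := hinv_nonneg _ (sub_nonneg.2 (hfge y))
      have hhc : h (hinv (f y - fstar)) = f y - fstar := h_hinv _ (sub_nonneg.2 (hfge y))
      have ht := tangent (B j) hBj (hinv (f y - fstar)) hc0
      rw [hhc, hhB] at ht
      have hsubj := hsub j y
      have h1 : ⟪g j, y - x j⟫ ≤ h' (B j) * (hinv (f y - fstar) - B j) := by linarith
      have h2 : ⟪G j, y - x j⟫ = (h' (B j))⁻¹ * ⟪g j, y - x j⟫ := by
        rw [hGj, real_inner_smul_left]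
      have h3 := mul_le_mul_of_nonneg_left h1 (le_of_lt (inv_pos.2 hp'))
      rw [← mul_assoc, inv_mul_cancel₀ hp'.ne', one_mul] at h3
      rw [h2]; linarith
  -- upper bound : hinv ∘ (f - fstar) ≤ dist to Xstar squared
  have upper : ∀ y : E, hinv (f y - fstar) ≤ Metric.infDist y Xstar ^ 2 := by
    intro y
    have h1 := hRG y
    have h2 := hinv_mono _ _ (sub_nonneg.2 (hfge y)) (h_nonneg _ (sq_nonneg _)) h1
    rwa [hinv_h _ (sq_nonneg _)] at h2
  -- key inner product bound with the extra ‖G‖²/4 term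
  have innA : ∀ p ∈ Xstar, ∀ j : ℕ, B j + ‖G j‖^2/4 ≤ ⟪G j, x j - p⟫ := by
    intro p hp j
    have hk := key j (p + (2:ℝ)⁻¹ • G j)
    have hup := upper (p + (2:ℝ)⁻¹ • G j)
    have hdist : Metric.infDist (p + (2:ℝ)⁻¹ • G j) Xstar ≤ ‖(2:ℝ)⁻¹ • G j‖ := by
      have h1 := Metric.infDist_le_dist_of_mem (x := p + (2:ℝ)⁻¹ • G j) hp
      rwa [dist_eq_norm, add_sub_cancel_left] at h1
    have hsq : Metric.infDist (p + (2:ℝ)⁻¹ • G j) Xstar ^ 2 ≤ ‖G j‖^2/4 := by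
      have h2 : ‖(2:ℝ)⁻¹ • G j‖^2 = ‖G j‖^2/4 := by
        rw [norm_smul]
        simp [norm_inv]
        ring
      calc Metric.infDist (p + (2:ℝ)⁻¹ • G j) Xstar ^ 2
          ≤ ‖(2:ℝ)⁻¹ • G j‖^2 := by
            apply pow_le_pow_left₀ Metric.infDist_nonneg hdist
        _ = ‖G j‖^2/4 := h2
    have hinner : ⟪G j, p + (2:ℝ)⁻¹ • G j - x j⟫
        = -⟪G j, x j - p⟫ + ‖G j‖^2/2 := by
      have he : p + (2:ℝ)⁻¹ • G j - x j = -(x j - p) + (2:ℝ)⁻¹ • G j := by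
        abel
      rw [he, inner_add_right, inner_neg_right, real_inner_smul_right,
        real_inner_self_eq_norm_sq]
      ring
    rw [hinner] at hk
    linarith
  -- monotonicity along the momentum direction
  have innB : ∀ j : ℕ, B j - B (j-1) ≤ ⟪G j, x j - x (j-1)⟫ := by
    intro j
    have hk := key j (x (j-1))
    have he : ⟪G j, x (j-1) - x j⟫ = -⟪G j, x j - x (j-1)⟫ := by
      rw [← inner_neg_right]; congr 1; abel
    rw [he] at hk
    have := hBnonneg (j-1)
    simp only [hBdef] at hk ⊢
    linarith
  -- the s recursion
  have hsrec : ∀ j : ℕ, s (j+1) = s j - (2:ℝ)⁻¹ • G j := by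
    intro j
    have hu := hupd (j+1) (Nat.le_add_left 1 j)
    simp only [Nat.add_sub_cancel, Nat.succ_sub_succ_eq_sub, Nat.sub_zero] at hu
    push_cast at hu
    have hj2 : ((j:ℝ) + 2) ≠ 0 := by positivity
    simp only [hsdef, hGdef, Nat.add_sub_cancel]
    rw [hu]
    push_cast
    match_scalars
    · field_simp
      ring
    · field_simp
      ring
    · field_simp
      ring
  -- one step of the Lyapunov estimate
  have step : ∀ p ∈ Xstar, ∀ j : ℕ,
      ‖s (j+1) - p‖^2 + ((j:ℝ)+1) * B j ≤ ‖s j - p‖^2 + (j:ℝ) * B (j-1) := by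
    intro p hp j
    have hsplit : s j - p = (x j - p) + (j:ℝ) • (x j - x (j-1)) := by
      simp only [hsdef]
      module
    have hnorm : ‖s (j+1) - p‖^2 = ‖s j - p‖^2 - ⟪G j, s j - p⟫ + ‖G j‖^2/4 := by
      rw [hsrec j]
      have he : s j - (2:ℝ)⁻¹ • G j - p = (s j - p) - (2:ℝ)⁻¹ • G j := by abel
      rw [he, norm_sub_sq_real, real_inner_smul_right, norm_smul]
      simp only [norm_inv, Real.norm_ofNat]
      rw [real_inner_comm]
      ring
    have hinner : (j:ℝ) * (B j - B (j-1)) + (B j + ‖G j‖^2/4) ≤ ⟪G j, s j - p⟫ := by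
      rw [hsplit, inner_add_right, real_inner_smul_right]
      have h1 := innA p hp j
      have h2 := innB j
      have h3 := mul_le_mul_of_nonneg_left h2 (Nat.cast_nonneg j : (0:ℝ) ≤ (j:ℕ))
      linarith
    rw [hnorm]
    linarith
  -- iterate the Lyapunov estimate
  have mono : ∀ p ∈ Xstar, ∀ n : ℕ, ‖s n - p‖^2 + (n:ℝ) * B (n-1) ≤ ‖x 0 - p‖^2 := by
    intro p hp n
    induction n with
    | zero =>
      simp only [hsdef, Nat.cast_zero, zero_add, one_smul, zero_smul, sub_zero, zero_mul,
        add_zero]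
      exact le_refl _
    | succ n ih =>
      have h1 := step p hp n
      have h2 : ((n+1 : ℕ) : ℝ) = (n:ℝ) + 1 := by push_cast; ring
      have h3 : (n+1) - 1 = n := by omega
      rw [h2, h3]
      linarith
  -- conclude the bound on B n
  have bn_le : ∀ n : ℕ, ((n:ℝ)+1) * B n ≤ Metric.infDist (x 0) Xstar ^ 2 := by
    intro n
    have hb : ∀ p ∈ Xstar, ((n:ℝ)+1) * B n ≤ dist (x 0) p ^ 2 := by
      intro p hp
      have h1 := mono p hp (n+1)
      have h2 : ((n+1 : ℕ) : ℝ) = (n:ℝ) + 1 := by push_cast; ring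
      have h3 : (n+1) - 1 = n := by omega
      rw [h2, h3] at h1
      have h4 : (0:ℝ) ≤ ‖s (n+1) - p‖^2 := sq_nonneg _
      rw [dist_eq_norm]
      linarith
    have hc0 : 0 ≤ ((n:ℝ)+1) * B n := mul_nonneg (by positivity) (hBnonneg n)
    by_contra hcon
    push_neg at hcon
    have h1 : Metric.infDist (x 0) Xstar < Real.sqrt (((n:ℝ)+1) * B n) := by
      have h2 := Real.sqrt_lt_sqrt (sq_nonneg (Metric.infDist (x 0) Xstar)) hcon
      rwa [Real.sqrt_sq Metric.infDist_nonneg] at h2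
    obtain ⟨p, hp, hlt⟩ := (Metric.infDist_lt_iff ⟨z0, hz0mem⟩).1 h1
    have h5 := hb p hp
    have h6 : dist (x 0) p ^ 2 < ((n:ℝ)+1) * B n := by
      have hd0 : (0:ℝ) ≤ dist (x 0) p := dist_nonneg
      nlinarith [Real.sq_sqrt hc0]
    linarith
  -- final conclusion
  intro n
  have h1 : Metric.infDist (x n) Xstar ^ 2 / κ ≤ B n := by
    have h2 := hLG (x n)
    have h3 : (0:ℝ) ≤ Metric.infDist (x n) Xstar ^ 2 / κ := by positivity
    have h4 := hinv_mono _ _ (h_nonneg _ h3) (sub_nonneg.2 (hfge _)) h2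
    rwa [hinv_h _ h3] at h4
  have h2 := bn_le n
  have hn1 : (0:ℝ) < (n:ℝ) + 1 := by positivity
  rw [div_le_iff₀ hκ0] at h1
  calc Metric.infDist (x n) Xstar ^ 2 ≤ B n * κ := h1
    _ ≤ κ / ((n:ℝ)+1) * Metric.infDist (x 0) Xstar ^ 2 := by
        rw [div_mul_eq_mul_div, le_div_iff₀ hn1]
        nlinarith
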